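/- Let f₁,…,f_N : [0,1] → [0,1] be increasing homeomorphisms with fᵢ(0)=0, fᵢ(1)=1, and (p₁,…,p_N) a probability vector with all pᵢ > 0. Suppose for every x ∈ (0,1) there exist indices i, j with fᵢ(x) < x < f_j(x). Then for any probability measure μ on (0,1) invariant under the Markov operator Pμ(A) = Σᵢ pᵢ μ(fᵢ⁻¹(A)), both 0 and 1 belong to the support of μ (viewing μ as a measure on [0,1]). -/

import Mathlib

open Set MeasureTheory

/-- Key lemma: in an IFS of increasing maps fixing `0`, where every interior point is
moved left by some map, every invariant measure with `μ (Ioo 0 1) = 1` gives positive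
mass to every right neighbourhood of `0`. -/
lemma stmt4_key (N : ℕ) (f : Fin N → ℝ → ℝ) (p : Fin N → ℝ)
    (hmeas : ∀ i, Measurable (f i))
    (hmono : ∀ i, StrictMonoOn (f i) (Icc 0 1))
    (hcont : ∀ i, ContinuousOn (f i) (Icc 0 1))
    (h0 : ∀ i, f i 0 = 0)
    (hp : ∀ i, 0 < p i)
    (hmin : ∀ x ∈ Ioo (0:ℝ) 1, ∃ i, f i x < x)
    (μ : Measure ℝ)
    (hμ01 : μ (Ioo (0:ℝ) 1) = 1)
    (hinv : (∑ i, ENNReal.ofReal (p i) • Measure.map (f i) μ) = μ) :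
    ∀ ε > 0, 0 < μ (Ioo (0:ℝ) ε) := by
  have hsum : ∀ s : Set ℝ, MeasurableSet s →
      μ s = ∑ i, ENNReal.ofReal (p i) * μ (f i ⁻¹' s) := by
    intro s hs
    calc μ s = (∑ i, ENNReal.ofReal (p i) • Measure.map (f i) μ) s := by rw [hinv]
      _ = ∑ i, (ENNReal.ofReal (p i) • Measure.map (f i) μ) s :=
          Measure.finset_sum_apply _ _ _
      _ = ∑ i, ENNReal.ofReal (p i) * μ (f i ⁻¹' s) := by
          refine Finset.sum_congr rfl fun i _ => ?_
          rw [Measure.smul_apply, Measure.map_apply (hmeas i) hs, smul_eq_mul]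
  intro ε hε
  by_contra h
  have hεS : μ (Ioo (0:ℝ) ε) = 0 := by simpa using h
  set S := {t : ℝ | μ (Ioo 0 t) = 0} with hSdef
  have hεmem : ε ∈ S := hεS
  have hS1 : ∀ t ∈ S, t ≤ 1 := by
    intro t ht
    by_contra hlt
    push_neg at hlt
    have h1 : μ (Ioo (0:ℝ) 1) ≤ μ (Ioo 0 t) := measure_mono (Ioo_subset_Ioo le_rfl hlt.le)
    rw [ht, hμ01] at h1
    exact one_ne_zero (le_antisymm h1 (zero_le))
  have hbdd : BddAbove S := ⟨1, hS1⟩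
  set a := sSup S with hadef
  have haε : ε ≤ a := le_csSup hbdd hεmem
  have ha0 : 0 < a := lt_of_lt_of_le hε haε
  have hlow : ∀ t, t < a → μ (Ioo 0 t) = 0 := by
    intro t ht
    obtain ⟨s, hsS, hts⟩ := exists_lt_of_lt_csSup ⟨ε, hεmem⟩ ht
    exact le_antisymm (le_trans (measure_mono (Ioo_subset_Ioo le_rfl hts.le)) hsS.le) (zero_le)
  have hhigh : ∀ t, a < t → μ (Ioo 0 t) ≠ 0 := by
    intro t ht hz
    exact absurd (le_csSup hbdd hz) (not_le.mpr ht)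
  have ha1 : a < 1 := by
    rcases lt_or_ge a 1 with h' | h'
    · exact h'
    · exfalso
      have hcover : Ioo (0:ℝ) 1 ⊆ ⋃ n : ℕ, Ioo 0 (1 - 1/(n+1)) := by
        intro x hx
        obtain ⟨n, hn⟩ := exists_nat_one_div_lt (sub_pos.mpr hx.2)
        exact mem_iUnion.mpr ⟨n, hx.1, by linarith⟩
      have hz : μ (Ioo (0:ℝ) 1) = 0 := by
        refine le_antisymm (le_trans (measure_mono hcover) ?_) (zero_le)
        rw [measure_iUnion_null fun n => hlow _ ?_]
        have hn : (0:ℝ) < 1/((n:ℝ)+1) := by positivity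
        linarith
      rw [hμ01] at hz
      exact one_ne_zero hz
  obtain ⟨i, hi⟩ := hmin a ⟨ha0, ha1⟩
  set c := (f i a + a)/2 with hcdef
  have hca : c < a := by rw [hcdef]; linarith
  have hfic : f i a < c := by rw [hcdef]; linarith
  have haIcc : a ∈ Icc (0:ℝ) 1 := ⟨ha0.le, ha1.le⟩
  have hten : Filter.Tendsto (f i) (nhdsWithin a (Icc 0 1)) (nhds (f i a)) := hcont i a haIcc
  have hmem : (f i) ⁻¹' (Iio c) ∈ nhdsWithin a (Icc 0 1) := hten (Iio_mem_nhds hfic)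
  obtain ⟨U, hUo, haU, hUsub⟩ := mem_nhdsWithin.mp hmem
  obtain ⟨δ, hδ0, hball⟩ := Metric.isOpen_iff.mp hUo a haU
  set b := min (a + δ/2) ((a+1)/2) with hbdef
  have hab : a < b := lt_min (by linarith) (by linarith)
  have hb1 : b < 1 := min_lt_of_right_lt (by linarith)
  have hsub : Ioo 0 b ⊆ f i ⁻¹' (Ioo 0 c) := by
    intro x hx
    have hx1 : x < 1 := hx.2.trans hb1
    have hxIcc : x ∈ Icc (0:ℝ) 1 := ⟨hx.1.le, hx1.le⟩
    have h0Icc : (0:ℝ) ∈ Icc (0:ℝ) 1 := ⟨le_rfl, zero_le_one⟩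
    constructor
    · have := hmono i h0Icc hxIcc hx.1
      rwa [h0 i] at this
    · rcases le_or_gt x a with hxa | hxa
      · have hle : f i x ≤ f i a := (hmono i).monotoneOn hxIcc haIcc hxa
        exact lt_of_le_of_lt hle hfic
      · have hxb : x < a + δ/2 := lt_of_lt_of_le hx.2 (min_le_left _ _)
        have hxU : x ∈ U := by
          apply hball
          rw [Metric.mem_ball, Real.dist_eq, abs_of_nonneg (by linarith : (0:ℝ) ≤ x - a)]
          linarith
        exact hUsub ⟨hxU, hxIcc⟩
  have h1 : μ (Ioo 0 c) = 0 := hlow c hca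
  have h2 : ENNReal.ofReal (p i) * μ (f i ⁻¹' (Ioo 0 c)) ≤ μ (Ioo 0 c) := by
    rw [hsum _ measurableSet_Ioo]
    exact Finset.single_le_sum (f := fun j => ENNReal.ofReal (p j) * μ (f j ⁻¹' Ioo 0 c))
      (fun j _ => zero_le) (Finset.mem_univ i)
  have h3 : μ (f i ⁻¹' (Ioo 0 c)) ≠ 0 := by
    intro hz
    exact hhigh b hab (le_antisymm (le_trans (measure_mono hsub) hz.le) (zero_le))
  have h4 : ENNReal.ofReal (p i) ≠ 0 := (ENNReal.ofReal_pos.mpr (hp i)).ne'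
  rw [h1] at h2
  have h5 : ENNReal.ofReal (p i) * μ (f i ⁻¹' (Ioo 0 c)) = 0 :=
    le_antisymm h2 (zero_le)
  exact (ENNReal.mul_pos h4 h3).ne' h5

/-- For an admissible-type iterated function system of increasing
homeomorphisms of `[0,1]` fixing the endpoints, with all probabilities positive and
such that every interior point is moved left by some map and right by another,
every invariant probability measure concentrated on `(0,1)` has both `0` and `1`
in its (closed) support: every open neighbourhood of `0` or of `1` has positive mass. -/
theorem stmt4 (N : ℕ) (f : Fin N → ℝ → ℝ) (p : Fin N → ℝ)
    (hmeas : ∀ i, Measurable (f i))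
    (hmono : ∀ i, StrictMonoOn (f i) (Icc 0 1))
    (hmaps : ∀ i, MapsTo (f i) (Icc 0 1) (Icc 0 1))
    (hcont : ∀ i, ContinuousOn (f i) (Icc 0 1))
    (hsurj : ∀ i, SurjOn (f i) (Icc 0 1) (Icc 0 1))
    (h0 : ∀ i, f i 0 = 0) (h1 : ∀ i, f i 1 = 1)
    (hp : ∀ i, 0 < p i) (hp1 : ∑ i, p i = 1)
    (hminmax : ∀ x ∈ Ioo (0:ℝ) 1, (∃ i, f i x < x) ∧ (∃ j, x < f j x))
    (μ : Measure ℝ) (hprob : IsProbabilityMeasure μ)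
    (hμ01 : μ (Ioo (0:ℝ) 1) = 1)
    (hinv : (∑ i, ENNReal.ofReal (p i) • Measure.map (f i) μ) = μ) :
    (∀ U : Set ℝ, IsOpen U → (0:ℝ) ∈ U → 0 < μ U) ∧
    (∀ U : Set ℝ, IsOpen U → (1:ℝ) ∈ U → 0 < μ U) := by
  have hsumμ : ∀ s : Set ℝ, MeasurableSet s →
      μ s = ∑ i, ENNReal.ofReal (p i) * μ (f i ⁻¹' s) := by
    intro s hs
    calc μ s = (∑ i, ENNReal.ofReal (p i) • Measure.map (f i) μ) s := by rw [hinv]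
      _ = ∑ i, (ENNReal.ofReal (p i) • Measure.map (f i) μ) s :=
          Measure.finset_sum_apply _ _ _
      _ = ∑ i, ENNReal.ofReal (p i) * μ (f i ⁻¹' s) := by
          refine Finset.sum_congr rfl fun i _ => ?_
          rw [Measure.smul_apply, Measure.map_apply (hmeas i) hs, smul_eq_mul]
  constructor
  · -- measure near 0
    intro U hUo hU0
    obtain ⟨δ, hδ0, hball⟩ := Metric.isOpen_iff.mp hUo 0 hU0
    have hkey := stmt4_key N f p hmeas hmono hcont h0 hp
      (fun x hx => (hminmax x hx).1) μ hμ01 hinv δ hδ0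
    refine lt_of_lt_of_le hkey (measure_mono ?_)
    intro x hx
    apply hball
    rw [Metric.mem_ball, Real.dist_eq, sub_zero, abs_of_pos hx.1]
    exact hx.2
  · -- measure near 1 : reflect by `x ↦ 1 - x`
    set r : ℝ → ℝ := fun x => 1 - x with hrdef
    have hrmeas : Measurable r := measurable_const.sub measurable_id
    have hrmaps : MapsTo r (Icc 0 1) (Icc (0:ℝ) 1) := by
      intro x hx
      simp only [hrdef, mem_Icc]
      exact ⟨by linarith [hx.2], by linarith [hx.1]⟩
    set g : Fin N → ℝ → ℝ := fun i x => 1 - f i (1 - x) with hgdef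
    set μ' := Measure.map r μ with hμ'def
    have hgmeas : ∀ i, Measurable (g i) :=
      fun i => measurable_const.sub ((hmeas i).comp hrmeas)
    have hgmono : ∀ i, StrictMonoOn (g i) (Icc 0 1) := by
      intro i x hx y hy hxy
      have hx' : (1 - x) ∈ Icc (0:ℝ) 1 := hrmaps hx
      have hy' : (1 - y) ∈ Icc (0:ℝ) 1 := hrmaps hy
      have := hmono i hy' hx' (by linarith)
      simp only [hgdef]
      linarith
    have hgcont : ∀ i, ContinuousOn (g i) (Icc 0 1) := by
      intro i
      have hc : ContinuousOn (fun x => f i (1 - x)) (Icc 0 1) :=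
        (hcont i).comp (continuous_const.sub continuous_id).continuousOn hrmaps
      exact continuous_const.continuousOn.sub hc
    have hg0 : ∀ i, g i 0 = 0 := by
      intro i
      simp only [hgdef, sub_zero, h1 i, sub_self]
    have hgmin : ∀ x ∈ Ioo (0:ℝ) 1, ∃ i, g i x < x := by
      intro x hx
      obtain ⟨j, hj⟩ := (hminmax (1 - x) ⟨by linarith [hx.2], by linarith [hx.1]⟩).2
      exact ⟨j, by simp only [hgdef]; linarith⟩
    have hrIoo : r ⁻¹' (Ioo (0:ℝ) 1) = Ioo (0:ℝ) 1 := by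
      ext x
      simp only [hrdef, mem_preimage, mem_Ioo]
      constructor <;> rintro ⟨hx1, hx2⟩ <;> exact ⟨by linarith, by linarith⟩
    have hμ'01 : μ' (Ioo (0:ℝ) 1) = 1 := by
      rw [hμ'def, Measure.map_apply hrmeas measurableSet_Ioo, hrIoo, hμ01]
    have hginv : (∑ i, ENNReal.ofReal (p i) • Measure.map (g i) μ') = μ' := by
      refine Measure.ext fun s hs => ?_
      have hcomp : ∀ i, r ⁻¹' (g i ⁻¹' s) = f i ⁻¹' (r ⁻¹' s) := by
        intro i
        ext x
        simp only [mem_preimage, hgdef, hrdef, sub_sub_cancel]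
      calc (∑ i, ENNReal.ofReal (p i) • Measure.map (g i) μ') s
          = ∑ i, (ENNReal.ofReal (p i) • Measure.map (g i) μ') s :=
            Measure.finset_sum_apply _ _ _
        _ = ∑ i, ENNReal.ofReal (p i) * μ (f i ⁻¹' (r ⁻¹' s)) := by
            refine Finset.sum_congr rfl fun i _ => ?_
            rw [Measure.smul_apply, Measure.map_apply (hgmeas i) hs, hμ'def,
              Measure.map_apply hrmeas ((hgmeas i) hs), hcomp i, smul_eq_mul]
        _ = μ (r ⁻¹' s) := (hsumμ _ (hrmeas hs)).symm
        _ = μ' s := (Measure.map_apply hrmeas hs).symm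
    intro U hUo hU1
    obtain ⟨δ, hδ0, hball⟩ := Metric.isOpen_iff.mp hUo 1 hU1
    have hkey := stmt4_key N g p hgmeas hgmono hgcont hg0 hp hgmin μ' hμ'01 hginv δ hδ0
    have hμ'eq : μ' (Ioo 0 δ) = μ (Ioo (1 - δ) 1) := by
      rw [hμ'def, Measure.map_apply hrmeas measurableSet_Ioo]
      congr 1
      ext x
      simp only [hrdef, mem_preimage, mem_Ioo]
      constructor <;> rintro ⟨hx1, hx2⟩ <;> exact ⟨by linarith, by linarith⟩
    rw [hμ'eq] at hkey
    refine lt_of_lt_of_le hkey (measure_mono ?_)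
    intro x hx
    apply hball
    rw [Metric.mem_ball, Real.dist_eq, abs_of_nonpos (by linarith [hx.2] : x - 1 ≤ 0)]
    linarith [hx.1]
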